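/- Let F : ℝ → ℝ be a positive C² function on ℝ satisfying F'' ≥ 4F² on all of ℝ, and suppose F is bounded. Then F ≡ 0 (contradiction with positivity), i.e., no positive bounded C² function on ℝ satisfies F'' ≥ 4F² everywhere; consequently any nonnegative bounded C² solution of F'' ≥ 4F² on ℝ is identically zero. -/

import Mathlib

/-- Any nonnegative bounded `C²` function `F : ℝ → ℝ` satisfying `F'' ≥ 4F²` on all of
`ℝ` is identically zero. -/
theorem stmt_4 (F : ℝ → ℝ) (hF : ContDiff ℝ 2 F) (hpos : ∀ x, 0 ≤ F x)
    (hbdd : ∃ M : ℝ, ∀ x, F x ≤ M)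
    (hineq : ∀ x, 4 * (F x) ^ 2 ≤ deriv (deriv F) x) :
    ∀ x, F x = 0 := by
  obtain ⟨M, hM⟩ := hbdd
  have hFd : Differentiable ℝ F := hF.differentiable (by norm_num)
  have hF1 : ContDiff ℝ 1 (deriv F) := by
    have h2 : ContDiff ℝ (1 + 1) F := by
      have e : (1 + 1 : WithTop ℕ∞) = 2 := by norm_num
      rw [e]; exact hF
    have := (contDiff_succ_iff_deriv.mp h2).2.2
    exact_mod_cast this
  have hF'd : Differentiable ℝ (deriv F) := hF1.differentiable one_ne_zero
  have hmono : Monotone (deriv F) := by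
    apply monotone_of_deriv_nonneg hF'd
    intro x
    exact le_trans (by positivity) (hineq x)
  have hderg : ∀ a x : ℝ, deriv (fun y => F y - a * y) x = deriv F x - a := by
    intro a x
    have h : HasDerivAt (fun y => F y - a * y) (deriv F x - a * 1) x :=
      (hFd x).hasDerivAt.sub ((hasDerivAt_id x).const_mul a)
    simpa using h.deriv
  have hzero : ∀ x, deriv F x = 0 := by
    intro x0
    by_contra ha
    set a := deriv F x0 with hadef
    have hane : a ≠ 0 := ha
    rcases lt_or_gt_of_ne hane with hneg | hposa
    · -- a < 0 : go left
      have hanti : AntitoneOn (fun y => F y - a * y) (Set.Iic x0) := by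
        apply antitoneOn_of_deriv_nonpos (convex_Iic x0)
        · exact Continuous.continuousOn (hFd.continuous.sub (continuous_const.mul continuous_id))
        · intro x hx
          exact ((hFd x).sub (by fun_prop)).differentiableWithinAt
        · intro x hx
          rw [interior_Iic] at hx
          rw [hderg a x, sub_nonpos]
          exact hmono (le_of_lt hx)
      set x1 := x0 + (M + 1 - F x0) / a with hx1
      have hnum : 0 < M + 1 - F x0 := by linarith [hM x0]
      have hx1le : x1 ≤ x0 := by
        have := div_nonpos_of_nonneg_of_nonpos (le_of_lt hnum) (le_of_lt hneg)
        rw [hx1]; linarith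
      have hineq2 := hanti (Set.mem_Iic.mpr hx1le) (Set.mem_Iic.mpr le_rfl) hx1le
      have hax : a * (x1 - x0) = M + 1 - F x0 := by
        rw [hx1]
        field_simp
        ring
      simp only at hineq2
      have hFx1 : M + 1 ≤ F x1 := by nlinarith
      linarith [hM x1]
    · -- a > 0 : go right
      have hmono2 : MonotoneOn (fun y => F y - a * y) (Set.Ici x0) := by
        apply monotoneOn_of_deriv_nonneg (convex_Ici x0)
        · exact Continuous.continuousOn (hFd.continuous.sub (continuous_const.mul continuous_id))
        · intro x hx
          exact ((hFd x).sub (by fun_prop)).differentiableWithinAt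
        · intro x hx
          rw [interior_Ici] at hx
          rw [hderg a x, sub_nonneg]
          exact hmono (le_of_lt hx)
      set x1 := x0 + (M + 1 - F x0) / a with hx1
      have hnum : 0 < M + 1 - F x0 := by linarith [hM x0]
      have hx1le : x0 ≤ x1 := by
        have := div_nonneg (le_of_lt hnum) (le_of_lt hposa)
        rw [hx1]; linarith
      have hineq2 := hmono2 (Set.mem_Ici.mpr le_rfl) (Set.mem_Ici.mpr hx1le) hx1le
      have hax : a * (x1 - x0) = M + 1 - F x0 := by
        rw [hx1]
        field_simp
        ring
      simp only at hineq2
      have hFx1 : M + 1 ≤ F x1 := by nlinarith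
      linarith [hM x1]
  have hder2 : ∀ x, deriv (deriv F) x = 0 := by
    have : deriv F = fun _ => 0 := funext hzero
    intro x
    rw [this]
    simp
  intro x
  have h := hineq x
  rw [hder2 x] at h
  nlinarith [hpos x]
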